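/- Let A be an m×n matrix over a finite field F_q, and let Σ be a uniformly random element of ker(A) ⊆ F_q^n. Suppose I ⊆ {1,...,n} is disjoint from the set F(A) of frozen indices of A and is not a relation of A. Then the coordinates (Σ_i)_{i∈I} are mutually independent and each Σ_i for i ∈ I is uniformly distributed on F_q; in particular, for all τ ∈ F_q^I, P(∀i∈I: Σ_i = τ_i) = ∏_{i∈I} P(Σ_i = τ_i). -/

import Mathlib

open scoped Classical

/-- `I` is a relation of `A`. -/
def IsRelation {F : Type*} [Field F] {m n : Type*} [Fintype m]
    (A : Matrix m n F) (I : Set n) : Prop :=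
  ∃ y : m → F, (Function.support (Matrix.vecMul y A)).Nonempty ∧
    Function.support (Matrix.vecMul y A) ⊆ I

/-- Surjectivity of the restriction to `I` on the kernel, when `I` is not a relation. -/
lemma key_surj {F : Type*} [Field F] {m n : ℕ}
    (A : Matrix (Fin m) (Fin n) F) (I : Finset (Fin n))
    (hrel : ¬ IsRelation A (↑I : Set (Fin n))) (τ : Fin n → F) :
    ∃ x, A.mulVec x = 0 ∧ ∀ i ∈ I, x i = τ i := by
  classical
  set W : Submodule F (Fin n → F) := LinearMap.ker A.mulVecLin with hW
  set π : (Fin n → F) →ₗ[F] (↥I → F) := LinearMap.pi (fun i => LinearMap.proj i.1) with hπ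
  by_cases hP : Submodule.map π W = ⊤
  · have hmem : (fun i : ↥I => τ i.1) ∈ Submodule.map π W := hP ▸ Submodule.mem_top
    obtain ⟨x, hx, hπx⟩ := hmem
    exact ⟨x, hx, fun i hi => congrFun hπx ⟨i, hi⟩⟩
  · exfalso
    obtain ⟨φ, hφ0, hφ⟩ := Submodule.exists_le_ker_of_lt_top _ (lt_top_iff_ne_top.2 hP)
    set e : ↥I → (↥I → F) := fun i => fun j => if i = j then 1 else 0 with he
    set w : Fin n → F := fun j => if h : j ∈ I then φ (e ⟨j, h⟩) else 0 with hw
    have hφu : ∀ u : ↥I → F, φ u = ∑ i : ↥I, u i * φ (e i) := by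
      intro u
      rw [LinearMap.pi_apply_eq_sum_univ φ u]
      exact Finset.sum_congr rfl fun i _ => smul_eq_mul _ _
    have hdot : ∀ x ∈ W, (∑ j, w j * x j) = 0 := by
      intro x hx
      have h1 : φ (π x) = 0 := hφ (Submodule.mem_map_of_mem hx)
      have h2 : (∑ j, w j * x j) = φ (π x) := by
        rw [hφu (π x)]
        rw [show (∑ j, w j * x j) = ∑ j ∈ I, w j * x j by
          refine (Finset.sum_subset (Finset.subset_univ I) ?_).symm
          intro j _ hj; simp [hw, hj]]
        rw [← Finset.sum_attach I (fun j => w j * x j)]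
        refine Finset.sum_congr rfl fun i _ => ?_
        simp only [hw, i.2, dif_pos]
        rw [mul_comm]
        rfl
      rw [h2, h1]
    set L : Fin m → ((Fin n → F) →ₗ[F] F) :=
      fun i => (LinearMap.proj i).comp A.mulVecLin with hL
    set Kf : (Fin n → F) →ₗ[F] F := ∑ j, w j • LinearMap.proj j with hKf
    have hKfx : ∀ x, Kf x = ∑ j, w j * x j := by
      intro x; simp [hKf]
    have hker : (⨅ i : Fin m, LinearMap.ker (L i)) ≤ LinearMap.ker Kf := by
      intro x hx
      simp only [Submodule.mem_iInf, LinearMap.mem_ker, hL, LinearMap.comp_apply,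
        LinearMap.proj_apply] at hx
      have hxW : x ∈ W := by
        simp only [hW, LinearMap.mem_ker]
        ext i
        exact hx i
      rw [LinearMap.mem_ker, hKfx]
      exact hdot x hxW
    have hspan := mem_span_of_iInf_ker_le_ker hker
    obtain ⟨c, hc⟩ := (Submodule.mem_span_range_iff_exists_fun F).1 hspan
    have hcw : Matrix.vecMul c A = w := by
      ext j
      have hthis := congrFun (congrArg (DFunLike.coe) hc) (Pi.single j (1:F))
      simp only [LinearMap.coe_sum, Finset.sum_apply, LinearMap.smul_apply,
        smul_eq_mul, hL, LinearMap.comp_apply, LinearMap.proj_apply,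
        Matrix.mulVecLin_apply] at hthis
      rw [hKfx] at hthis
      have h1 : (∑ j' : Fin n, w j' * (Pi.single j (1:F) : Fin n → F) j') = w j := by
        rw [Finset.sum_eq_single j]
        · simp
        · intro b _ hb; simp [Pi.single_apply, hb]
        · simp
      have h2 : A.mulVec (Pi.single j (1:F)) = fun i => A i j * 1 :=
        Matrix.mulVec_single A j 1
      rw [h1] at hthis
      rw [← hthis]
      simp only [Matrix.vecMul, dotProduct, h2, mul_one]
    have hwne : ∃ i : ↥I, w i.1 ≠ 0 := by
      by_contra h
      push_neg at h
      apply hφ0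
      refine LinearMap.ext fun u => ?_
      show φ u = 0
      rw [hφu u]
      refine Finset.sum_eq_zero fun i _ => ?_
      have hz : w i.1 = 0 := h i
      simp only [hw, i.2, dif_pos] at hz
      have hz' : φ (e i) = 0 := by
        have : (⟨i.1, i.2⟩ : ↥I) = i := Subtype.coe_eta i i.2
        rwa [this] at hz
      rw [hz', mul_zero]
    obtain ⟨i, hi⟩ := hwne
    exact hrel ⟨c, ⟨i.1, by rw [hcw]; exact hi⟩, by
      rw [hcw]
      intro j hj
      simp only [Function.mem_support, hw] at hj
      by_contra hjI
      simp only [Finset.mem_coe] at hjI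
      exact hj (dif_neg hjI)⟩

lemma count_fib {F : Type*} [Field F] [Fintype F] {m n : ℕ}
    (A : Matrix (Fin m) (Fin n) F) (I : Finset (Fin n))
    (hrel : ¬ IsRelation A (↑I : Set (Fin n)))
    (K : Finset (Fin n → F))
    (hK : K = Finset.univ.filter fun x => A.mulVec x = 0)
    (τ : Fin n → F) :
    (K.filter fun x => ∀ i ∈ I, x i = τ i).card * Fintype.card F ^ I.card = K.card := by
  classical
  have hmemK : ∀ x, x ∈ K ↔ A.mulVec x = 0 := by
    intro x; rw [hK, Finset.mem_filter]; simp
  set fib : (Fin n → F) → Finset (Fin n → F) :=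
    fun t => K.filter fun x => ∀ i ∈ I, x i = t i with hfib
  have hcardeq : ∀ t t' : Fin n → F, (fib t).card = (fib t').card := by
    intro t t'
    obtain ⟨et, het0, het⟩ := key_surj A I hrel t
    obtain ⟨et', het0', het'⟩ := key_surj A I hrel t'
    have hmem : ∀ s s' : Fin n → F, ∀ es es' : Fin n → F,
        A.mulVec es = 0 → A.mulVec es' = 0 → (∀ i ∈ I, es i = s i) →
        (∀ i ∈ I, es' i = s' i) → ∀ x ∈ fib s, x - es + es' ∈ fib s' := by
      intro s s' es es' hes hes' hesI hes'I x hx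
      rw [hfib, Finset.mem_filter] at hx ⊢
      obtain ⟨hxK, hxI⟩ := hx
      constructor
      · rw [hmemK] at hxK ⊢
        rw [Matrix.mulVec_add, Matrix.mulVec_sub, hxK, hes, hes']
        simp
      · intro i hi
        simp only [Pi.add_apply, Pi.sub_apply, hxI i hi, hesI i hi, hes'I i hi]
        ring
    refine Finset.card_bij' (fun x _ => x - et + et') (fun y _ => y - et' + et)
      (fun x hx => hmem t t' et et' het0 het0' het het' x hx)
      (fun y hy => hmem t' t et' et het0' het0 het' het y hy)
      (fun x _ => by funext j; simp only [Pi.add_apply, Pi.sub_apply]; ring)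
      (fun y _ => by funext j; simp only [Pi.add_apply, Pi.sub_apply]; ring)
  have hpart : K.card = ∑ tt : ↥I → F, (fib τ).card := by
    rw [Finset.card_eq_sum_card_fiberwise
      (f := fun x : Fin n → F => fun i : ↥I => x i.1) (t := Finset.univ)
      (fun x _ => Finset.mem_univ _)]
    refine Finset.sum_congr rfl fun tt _ => ?_
    have hfil : (K.filter fun x => (fun i : ↥I => x i.1) = tt)
        = fib (fun j => if h : j ∈ I then tt ⟨j, h⟩ else 0) := by
      refine Finset.filter_congr fun x _ => ?_
      constructor
      · intro h i hi
        simp only [dif_pos hi]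
        exact congrFun h ⟨i, hi⟩
      · intro h
        funext i
        have := h i.1 i.2
        simpa [i.2] using this
    rw [hfil, hcardeq _ τ]
  rw [hpart, Finset.sum_const, Finset.card_univ, smul_eq_mul]
  rw [show Fintype.card (↥I → F) = Fintype.card F ^ I.card by
    rw [Fintype.card_fun, Fintype.card_coe]]
  ring

theorem stmt_4 {F : Type*} [Field F] [Fintype F] {m n : ℕ}
    (A : Matrix (Fin m) (Fin n) F)
    (I : Finset (Fin n))
    (hfroz : ∀ i ∈ I, ¬ IsRelation A {i})
    (hrel : ¬ IsRelation A (↑I : Set (Fin n)))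
    (K : Finset (Fin n → F))
    (hK : K = Finset.univ.filter fun x => A.mulVec x = 0) :
    (∀ i ∈ I, ∀ c : F,
        ((K.filter fun x => x i = c).card : ℝ) / K.card = 1 / Fintype.card F) ∧
      (∀ τ : Fin n → F,
        ((K.filter fun x => ∀ i ∈ I, x i = τ i).card : ℝ) / K.card
          = ∏ i ∈ I, ((K.filter fun x => x i = τ i).card : ℝ) / K.card) := by
  classical
  have hKc : 0 < K.card := by
    refine Finset.card_pos.2 ⟨0, ?_⟩
    rw [hK, Finset.mem_filter]
    exact ⟨Finset.mem_univ _, Matrix.mulVec_zero A⟩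
  have hKne : (K.card : ℝ) ≠ 0 := Nat.cast_ne_zero.2 hKc.ne'
  have hq : (0:ℝ) < (Fintype.card F : ℝ) := by
    exact_mod_cast Fintype.card_pos
  have part1 : ∀ i ∈ I, ∀ c : F,
      ((K.filter fun x => x i = c).card : ℝ) / K.card = 1 / Fintype.card F := by
    intro i hi c
    have hrel1 : ¬ IsRelation A (↑({i} : Finset (Fin n)) : Set (Fin n)) := by
      rw [Finset.coe_singleton]; exact hfroz i hi
    have hcnt := count_fib A {i} hrel1 K hK (fun _ => c)
    have heq : (K.filter fun x => ∀ j ∈ ({i} : Finset (Fin n)), x j = c)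
        = K.filter fun x => x i = c := by
      refine Finset.filter_congr fun x _ => ?_
      simp
    rw [heq, Finset.card_singleton, pow_one] at hcnt
    have hcast : ((K.filter fun x => x i = c).card : ℝ) * (Fintype.card F : ℝ)
        = (K.card : ℝ) := by exact_mod_cast hcnt
    rw [div_eq_div_iff hKne hq.ne']
    linarith
  refine ⟨part1, fun τ => ?_⟩
  have hcnt := count_fib A I hrel K hK τ
  have hcast : ((K.filter fun x => ∀ i ∈ I, x i = τ i).card : ℝ)
      * (Fintype.card F : ℝ) ^ I.card = (K.card : ℝ) := by exact_mod_cast hcnt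
  have hrhs : (∏ i ∈ I, ((K.filter fun x => x i = τ i).card : ℝ) / K.card)
      = (1 / (Fintype.card F : ℝ)) ^ I.card := by
    rw [Finset.prod_congr rfl (fun i hi => part1 i hi (τ i)), Finset.prod_const]
  have hbne : ((K.filter fun x => ∀ i ∈ I, x i = τ i).card : ℝ) ≠ 0 := by
    intro h
    rw [h, zero_mul] at hcast
    exact hKne hcast.symm
  rw [hrhs]
  field_simp
  rw [← hcast, one_div_pow]
  field_simp
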